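/- Let Ω be a metric space, w : Ω → ℝ upper semicontinuous and bounded, ψ : Ω → ℝ continuous and bounded. Suppose (z₀) is a strict maximum point of w − ψ and (z_ε, ζ_ε) are maximizers of the doubled functional Φ_ε(z,ζ) = w(z) − w'(ζ) − ψ(z) − d(z,ζ)²/(2ε) with w' lower semicontinuous bounded and w − w' − ψ having strict maximum at z₀ on a compact set. Then along a subsequence, (z_ε, ζ_ε) → (z₀, z₀) as ε → 0. -/

import Mathlib

open Filter Topology Set

/-- Convergence of doubled-variable maximizers to a strict maximum point: if
`w` is u.s.c. bounded, `w'` is l.s.c. bounded, `ψ` is continuous and bounded,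
`w - w' - ψ` has a strict maximum over a compact set `S` at `z₀`, and
`(z_ε, ζ_ε) ∈ S × S` maximize `Φ_ε(z,ζ) = w(z) - w'(ζ) - ψ(z) - d(z,ζ)²/(2ε)`
over `S × S`, then along a subsequence `ε_n → 0⁺`, `(z_{ε_n}, ζ_{ε_n}) → (z₀, z₀)`. -/
theorem doubled_maximizers_converge {Ω : Type*} [MetricSpace Ω]
    (S : Set Ω) (hS : IsCompact S)
    (w w' ψ : Ω → ℝ)
    (hw : UpperSemicontinuous w) (hw' : LowerSemicontinuous w')
    (hψc : Continuous ψ)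
    (Cw Cw' Cψ : ℝ) (hwb : ∀ z, |w z| ≤ Cw) (hw'b : ∀ z, |w' z| ≤ Cw')
    (hψb : ∀ z, |ψ z| ≤ Cψ)
    (z₀ : Ω) (hz₀ : z₀ ∈ S)
    (hstrict : ∀ z ∈ S, z ≠ z₀ → w z - w' z - ψ z < w z₀ - w' z₀ - ψ z₀)
    (z ζ : ℝ → Ω) (hzS : ∀ ε > (0:ℝ), z ε ∈ S ∧ ζ ε ∈ S)
    (hmax : ∀ ε > (0:ℝ), ∀ p ∈ S, ∀ p' ∈ S,
      w p - w' p' - ψ p - (dist p p')^2 / (2*ε) ≤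
        w (z ε) - w' (ζ ε) - ψ (z ε) - (dist (z ε) (ζ ε))^2 / (2*ε)) :
    ∃ εs : ℕ → ℝ, (∀ n, 0 < εs n) ∧ Tendsto εs atTop (𝓝 0) ∧
      Tendsto (fun n => (z (εs n), ζ (εs n))) atTop (𝓝 (z₀, z₀)) := by
  classical
  set M : ℝ := w z₀ - w' z₀ - ψ z₀ with hM
  set ε : ℕ → ℝ := fun n => 1/(n+1) with hεdef
  have hεpos : ∀ n : ℕ, 0 < ε n := fun n => by positivity
  have hε0 : Tendsto ε atTop (𝓝 0) := tendsto_one_div_add_atTop_nhds_zero_nat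
  have hmem : ∀ n : ℕ, (z (ε n), ζ (ε n)) ∈ S ×ˢ S := fun n =>
    ⟨(hzS (ε n) (hεpos n)).1, (hzS (ε n) (hεpos n)).2⟩
  obtain ⟨⟨p, q⟩, hpq, φ, hφ, hconv⟩ := (hS.prod hS).tendsto_subseq hmem
  have hpS : p ∈ S := hpq.1
  refine ⟨ε ∘ φ, fun n => hεpos _, hε0.comp hφ.tendsto_atTop, ?_⟩
  have hzp : Tendsto (fun n => z (ε (φ n))) atTop (𝓝 p) :=
    (continuous_fst.tendsto _).comp hconv
  have hζq : Tendsto (fun n => ζ (ε (φ n))) atTop (𝓝 q) :=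
    (continuous_snd.tendsto _).comp hconv
  -- basic lower bound from maximality at (z₀, z₀)
  have hkey : ∀ n : ℕ, M ≤ w (z (ε n)) - w' (ζ (ε n)) - ψ (z (ε n))
      - (dist (z (ε n)) (ζ (ε n)))^2 / (2 * ε n) := by
    intro n
    have := hmax (ε n) (hεpos n) z₀ hz₀ z₀ hz₀
    simpa [hM] using this
  have hdistsq : ∀ n : ℕ, (dist (z (ε n)) (ζ (ε n)))^2 ≤ 2 * ε n * (2*(Cw + Cw' + Cψ)) := by
    intro n
    have h1 := hkey n
    have hb : w (z (ε n)) - w' (ζ (ε n)) - ψ (z (ε n)) - M ≤ 2*(Cw + Cw' + Cψ) := by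
      have := hwb (z (ε n)); have := hw'b (ζ (ε n)); have := hψb (z (ε n))
      have := hwb z₀; have := hw'b z₀; have := hψb z₀
      simp only [hM]
      cases abs_le.mp (hwb (z (ε n)))
      cases abs_le.mp (hw'b (ζ (ε n)))
      cases abs_le.mp (hψb (z (ε n)))
      cases abs_le.mp (hwb z₀)
      cases abs_le.mp (hw'b z₀)
      cases abs_le.mp (hψb z₀)
      linarith
    have hpos : 0 < 2 * ε n := by positivity
    have : (dist (z (ε n)) (ζ (ε n)))^2 / (2 * ε n) ≤ 2*(Cw + Cw' + Cψ) := by linarith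
    calc (dist (z (ε n)) (ζ (ε n)))^2
        = (dist (z (ε n)) (ζ (ε n)))^2 / (2 * ε n) * (2 * ε n) := (div_mul_cancel₀ _ hpos.ne').symm
      _ ≤ 2*(Cw + Cw' + Cψ) * (2 * ε n) := by
          exact mul_le_mul_of_nonneg_right this (le_of_lt hpos)
      _ = 2 * ε n * (2*(Cw + Cw' + Cψ)) := by ring
  -- dist (z εₙ) (ζ εₙ) → 0 along the subsequence
  have hdist0 : Tendsto (fun n => dist (z (ε (φ n))) (ζ (ε (φ n)))) atTop (𝓝 0) := by
    have hsq : Tendsto (fun n => (dist (z (ε (φ n))) (ζ (ε (φ n))))^2) atTop (𝓝 0) := by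
      have hub : Tendsto (fun n => 2 * ε (φ n) * (2*(Cw + Cw' + Cψ))) atTop (𝓝 0) := by
        have : Tendsto (fun n => ε (φ n)) atTop (𝓝 0) := hε0.comp hφ.tendsto_atTop
        have := (this.const_mul 2).mul_const (2*(Cw + Cw' + Cψ))
        simpa using this
      refine tendsto_of_tendsto_of_tendsto_of_le_of_le tendsto_const_nhds hub
        (fun n => sq_nonneg _) (fun n => hdistsq (φ n))
    have := hsq.sqrt
    simpa [Real.sqrt_sq dist_nonneg] using this
  -- hence q = p
  have hζp : Tendsto (fun n => ζ (ε (φ n))) atTop (𝓝 p) := by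
    rw [tendsto_iff_dist_tendsto_zero]
    have h1 : Tendsto (fun n => dist (ζ (ε (φ n))) (z (ε (φ n)))) atTop (𝓝 0) := by
      simpa [dist_comm] using hdist0
    have h2 : Tendsto (fun n => dist (z (ε (φ n))) p) atTop (𝓝 0) :=
      tendsto_iff_dist_tendsto_zero.mp hzp
    have hsum : Tendsto (fun n => dist (ζ (ε (φ n))) (z (ε (φ n))) + dist (z (ε (φ n))) p)
        atTop (𝓝 0) := by simpa using h1.add h2
    exact squeeze_zero (fun n => dist_nonneg)
      (fun n => dist_triangle (ζ (ε (φ n))) (z (ε (φ n))) p) hsum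
  have hqp : q = p := tendsto_nhds_unique hζq hζp
  -- w p - w' p - ψ p ≥ M
  have hMle : M ≤ w p - w' p - ψ p := by
    by_contra hcon
    push_neg at hcon
    set δ : ℝ := (M - (w p - w' p - ψ p)) / 3 with hδ
    have hδpos : 0 < δ := by simp only [hδ]; linarith
    have h1 : ∀ᶠ n in atTop, w (z (ε (φ n))) < w p + δ :=
      hzp.eventually (hw p (w p + δ) (by linarith))
    have h2 : ∀ᶠ n in atTop, w' p - δ < w' (ζ (ε (φ n))) :=
      hζp.eventually (hw' p (w' p - δ) (by linarith))
    have h3 : ∀ᶠ n in atTop, ψ p - δ < ψ (z (ε (φ n))) := by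
      have : Tendsto (fun n => ψ (z (ε (φ n)))) atTop (𝓝 (ψ p)) :=
        (hψc.tendsto p).comp hzp
      exact this.eventually (eventually_gt_nhds (by linarith))
    obtain ⟨n, hn1, hn2, hn3⟩ := (h1.and (h2.and h3)).exists
    have hk := hkey (φ n)
    have hd : 0 ≤ (dist (z (ε (φ n))) (ζ (ε (φ n))))^2 / (2 * ε (φ n)) := by positivity
    have : M ≤ w (z (ε (φ n))) - w' (ζ (ε (φ n))) - ψ (z (ε (φ n))) := by linarith
    have : w (z (ε (φ n))) - w' (ζ (ε (φ n))) - ψ (z (ε (φ n))) < M := by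
      simp only [hδ] at hn1 hn2 hn3 ⊢; linarith
    linarith
  have hp0 : p = z₀ := by
    by_contra hne
    exact absurd hMle (not_le.mpr (hstrict p hpS hne))
  have : Tendsto (fun n => (z (ε (φ n)), ζ (ε (φ n)))) atTop (𝓝 (z₀, z₀)) := by
    rw [Prod.tendsto_iff]
    exact ⟨hp0 ▸ hzp, hp0 ▸ hζp⟩
  simpa [Function.comp] using this
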